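/- For every nonnegative integer b, the identity ∑_{j=1}^{b} j · (b − 1 + κ_{j−1} + κ_{b−j} − κ_b) = 0 holds. -/

import Mathlib

open Finset Filter Topology

/-- The `n`-th harmonic number `H_n = ∑_i ∈ Finset.range n, 1/(i+1)`. -/
noncomputable def H (n : ℕ) : ℝ := ∑ i ∈ Finset.range n, (1 : ℝ) / (i + 1)

/-- `κ_n = 2(n+1)H_n - 4n`, the mean number of key comparisons for QuickSort on `n` keys. -/
noncomputable def κ (n : ℕ) : ℝ := 2 * (n + 1) * H n - 4 * n

lemma H_succ (n : ℕ) : H (n + 1) = H n + 1 / (n + 1) := by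
  simp [H, Finset.sum_range_succ]

lemma key_sum (b : ℕ) :
    2 * ∑ k ∈ Finset.range b, κ k = b * κ b - b * ((b : ℝ) - 1) := by
  induction b with
  | zero => simp [κ]
  | succ n ih =>
    rw [Finset.sum_range_succ, mul_add, ih]
    have hn : ((n : ℝ) + 1) ≠ 0 := by positivity
    simp only [κ, H_succ]
    push_cast
    field_simp
    ring

lemma triangle_sum (b : ℕ) :
    ∑ k ∈ Finset.range b, ((k : ℝ) + 1) = b * ((b : ℝ) + 1) / 2 := by
  induction b with
  | zero => simp
  | succ n ih => rw [Finset.sum_range_succ, ih]; push_cast; ring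

theorem weighted_identity (b : ℕ) :
    ∑ j ∈ Finset.Icc 1 b,
      (j : ℝ) * ((b : ℝ) - 1 + κ (j - 1) + κ (b - j) - κ b) = 0 := by
  have hIcc : ∑ j ∈ Finset.Icc 1 b,
      (j : ℝ) * ((b : ℝ) - 1 + κ (j - 1) + κ (b - j) - κ b)
      = ∑ k ∈ Finset.range b,
      ((k : ℝ) + 1) * ((b : ℝ) - 1 + κ k + κ (b - 1 - k) - κ b) := by
    have hmap : Finset.Icc 1 b
        = Finset.map ⟨fun k => k + 1, fun a b h => by simp only [add_left_inj] at h; exact h⟩ (Finset.range b) := by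
      ext j
      simp only [Finset.mem_Icc, Finset.mem_map, Finset.mem_range,
        Function.Embedding.coeFn_mk, DFunLike.coe]
      constructor
      · intro h; exact ⟨j - 1, by omega, by omega⟩
      · rintro ⟨k, hk, rfl⟩; omega
    rw [hmap, Finset.sum_map]
    apply Finset.sum_congr rfl
    intro k hk
    simp only [Function.Embedding.coeFn_mk, DFunLike.coe]
    have h1 : k + 1 - 1 = k := by omega
    have h2 : b - (k + 1) = b - 1 - k := by omega
    rw [h1, h2]
    push_cast
    ring
  rw [hIcc]
  have hrefl : ∑ k ∈ Finset.range b, ((k : ℝ) + 1) * κ (b - 1 - k)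
      = ∑ k ∈ Finset.range b, ((b : ℝ) - k) * κ k := by
    rw [← Finset.sum_range_reflect]
    apply Finset.sum_congr rfl
    intro k hk
    simp only [Finset.mem_range] at hk
    have h1 : b - 1 - (b - 1 - k) = k := by omega
    have h2 : ((b - 1 - k : ℕ) : ℝ) = (b : ℝ) - 1 - k := by
      have h3 : b - 1 - k + (k + 1) = b := by omega
      have h4 := congrArg (fun n : ℕ => (n : ℝ)) h3
      push_cast at h4
      linarith
    rw [h1, h2]
    ring
  have expand : ∀ k ∈ Finset.range b,
      ((k : ℝ) + 1) * ((b : ℝ) - 1 + κ k + κ (b - 1 - k) - κ b)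
      = ((k : ℝ) + 1) * ((b : ℝ) - 1 - κ b) + ((k : ℝ) + 1) * κ k
        + ((k : ℝ) + 1) * κ (b - 1 - k) := by
    intro k _; ring
  rw [Finset.sum_congr rfl expand, Finset.sum_add_distrib, Finset.sum_add_distrib, hrefl]
  have hsum := triangle_sum b
  have h3 : ∑ k ∈ Finset.range b, ((k : ℝ) + 1) * ((b : ℝ) - 1 - κ b)
      = (b * ((b : ℝ) + 1) / 2) * ((b : ℝ) - 1 - κ b) := by
    rw [← Finset.sum_mul, hsum]
  have h4 : ∑ k ∈ Finset.range b, ((k : ℝ) + 1) * κ k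
      + ∑ k ∈ Finset.range b, ((b : ℝ) - k) * κ k
      = ((b : ℝ) + 1) * ∑ k ∈ Finset.range b, κ k := by
    rw [← Finset.sum_add_distrib, Finset.mul_sum]
    apply Finset.sum_congr rfl
    intro k _; ring
  have hT : ∑ k ∈ Finset.range b, κ k = (b * κ b - b * ((b : ℝ) - 1)) / 2 := by
    have := key_sum b; linarith
  rw [add_assoc, h3, h4, hT]
  ring
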